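/- Let X be a regular Hausdorff symmetrizable topological space in which every point has a countably compact neighborhood. Then X × Y is symmetrizable for every symmetrizable topological space Y. -/

import Mathlib

open Filter Topology

/-- A semi-metric: nonnegative, symmetric, and vanishing exactly on the diagonal. -/
def IsSemiMetric {X : Type*} (d : X → X → ℝ) : Prop :=
  (∀ x y, 0 ≤ d x y) ∧ (∀ x y, d x y = d y x) ∧ (∀ x y, d x y = 0 ↔ x = y)

universe u

/-- A topological space is symmetrizable if some semi-metric determines its open sets. -/
def Symmetrizable (X : Type*) [TopologicalSpace X] : Prop :=
  ∃ d : X → X → ℝ, IsSemiMetric d ∧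
    ∀ U : Set X, IsOpen U ↔ ∀ x ∈ U, ∃ ε > 0, {y | d x y < ε} ⊆ U

/-- A subset is countably compact if every countable open cover has a finite subcover. -/
def CountablyCompactSet {X : Type*} [TopologicalSpace X] (K : Set X) : Prop :=
  ∀ U : ℕ → Set X, (∀ n, IsOpen (U n)) → K ⊆ ⋃ n, U n →
    ∃ t : Finset ℕ, K ⊆ ⋃ n ∈ t, U n

section Aux

variable {Z : Type*} [TopologicalSpace Z] {d : Z → Z → ℝ}

/-- d-convergence implies topological convergence. -/
lemma aux_tendsto (hdt : ∀ U : Set Z, IsOpen U ↔ ∀ x ∈ U, ∃ ε > 0, {y | d x y < ε} ⊆ U)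
    {z : Z} {u : ℕ → Z} (h : ∀ ε > (0:ℝ), ∀ᶠ n in atTop, d z (u n) < ε) :
    Tendsto u atTop (𝓝 z) := by
  rw [(nhds_basis_opens z).tendsto_right_iff]
  rintro V ⟨hzV, hV⟩
  obtain ⟨ε, hε, hball⟩ := (hdt V).mp hV z hzV
  filter_upwards [h ε hε] with n hn using hball hn

lemma aux_closed_iff (hdt : ∀ U : Set Z, IsOpen U ↔ ∀ x ∈ U, ∃ ε > 0, {y | d x y < ε} ⊆ U)
    (A : Set Z) :
    IsClosed A ↔ ∀ y ∉ A, ∃ ε > (0:ℝ), ∀ a ∈ A, ε ≤ d y a := by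
  rw [← isOpen_compl_iff, hdt]
  constructor
  · intro h y hy
    obtain ⟨ε, hε, hb⟩ := h y hy
    exact ⟨ε, hε, fun a ha => not_lt.mp (fun hlt => hb hlt ha)⟩
  · intro h y hy
    obtain ⟨ε, hε, hb⟩ := h y hy
    exact ⟨ε, hε, fun w hw hwA => absurd hw (not_lt.mpr (hb w hwA))⟩

lemma aux_isClosed_of_seq (hdt : ∀ U : Set Z, IsOpen U ↔ ∀ x ∈ U, ∃ ε > 0, {y | d x y < ε} ⊆ U)
    (A : Set Z)
    (h : ∀ (u : ℕ → Z) (z : Z), (∀ n, u n ∈ A) → Tendsto u atTop (𝓝 z) → z ∈ A) :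
    IsClosed A := by
  rw [← isOpen_compl_iff, hdt]
  intro x hx
  by_contra hcn
  push_neg at hcn
  have hsel : ∀ n : ℕ, ∃ y, d x y < 1 / (n + 1 : ℝ) ∧ y ∈ A := by
    intro n
    obtain ⟨y, hy, hyA⟩ := Set.not_subset.mp (hcn (1 / (n + 1 : ℝ)) (by positivity))
    exact ⟨y, hy, not_not.mp hyA⟩
  choose y hy hyA using hsel
  have hconv : Tendsto y atTop (𝓝 x) := by
    apply aux_tendsto hdt
    intro ε hε
    obtain ⟨N, hN⟩ := exists_nat_one_div_lt hε
    filter_upwards [eventually_ge_atTop N] with n hn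
    calc d x (y n) < 1 / (n + 1 : ℝ) := hy n
      _ ≤ 1 / (N + 1 : ℝ) := by
          apply one_div_le_one_div_of_le (by positivity)
          exact_mod_cast by omega
      _ < ε := hN
  exact hx (h y x hyA hconv)

/-- topological convergence implies d-convergence (in T2 symmetrizable). -/
lemma aux_dconv [T2Space Z] (hd : IsSemiMetric d)
    (hdt : ∀ U : Set Z, IsOpen U ↔ ∀ x ∈ U, ∃ ε > 0, {y | d x y < ε} ⊆ U)
    {z : Z} {u : ℕ → Z} (h : Tendsto u atTop (𝓝 z)) :
    ∀ ε > (0:ℝ), ∀ᶠ n in atTop, d z (u n) < ε := by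
  intro ε hε
  by_contra hc
  rw [Filter.not_eventually] at hc
  obtain ⟨φ, hφ, hφε⟩ := Filter.extraction_of_frequently_atTop hc
  set c : ℕ → Z := u ∘ φ with hc_def
  have hct : Tendsto c atTop (𝓝 z) := h.comp hφ.tendsto_atTop
  have hcompact : IsCompact (insert z (Set.range c)) := hct.isCompact_insert_range
  have hclosedT : IsClosed (insert z (Set.range c)) := hcompact.isClosed
  have hSclosed : IsClosed (Set.range c) := by
    rw [aux_closed_iff hdt]
    intro y hy
    by_cases hyz : y = z
    · subst hyz
      refine ⟨ε, hε, ?_⟩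
      rintro a ⟨n, rfl⟩
      exact not_lt.mp (hφε n)
    · have hyT : y ∉ insert z (Set.range c) := by
        simp only [Set.mem_insert_iff]
        tauto
      obtain ⟨δ, hδ, hall⟩ := (aux_closed_iff hdt _).mp hclosedT y hyT
      exact ⟨δ, hδ, fun a ha => hall a (Set.mem_insert_of_mem _ ha)⟩
  have hzS : z ∈ Set.range c := by
    have : z ∈ closure (Set.range c) :=
      mem_closure_of_tendsto hct (Filter.Eventually.of_forall (fun n => Set.mem_range_self n))
    rwa [hSclosed.closure_eq] at this
  obtain ⟨n, hn⟩ := hzS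
  have h0 : d z (c n) = 0 := by rw [hn]; exact (hd.2.2 z z).mpr rfl
  have := not_lt.mp (hφε n)
  rw [show d z (u (φ n)) = d z (c n) from rfl, h0] at this
  linarith

lemma aux_subseq [T2Space Z] (hd : IsSemiMetric d)
    (hdt : ∀ U : Set Z, IsOpen U ↔ ∀ x ∈ U, ∃ ε > 0, {y | d x y < ε} ⊆ U)
    {C : Set Z} (hCcl : IsClosed C) (hcc : CountablyCompactSet C)
    {u : ℕ → Z} (hu : ∀ n, u n ∈ C) :
    ∃ q ∈ C, ∃ φ : ℕ → ℕ, StrictMono φ ∧ Tendsto (u ∘ φ) atTop (𝓝 q) := by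
  by_contra hcon
  push_neg at hcon
  have hfib : ∀ x, {n | u n = x}.Finite := by
    intro x
    by_contra hinf
    replace hinf : {n | u n = x}.Infinite := hinf
    have hfreq : ∃ᶠ n in atTop, u n = x := by
      rw [Filter.frequently_atTop]
      intro a
      obtain ⟨b, hb, hab⟩ := hinf.exists_gt a
      exact ⟨b, le_of_lt hab, hb⟩
    obtain ⟨φ, hφ, hφx⟩ := Filter.extraction_of_frequently_atTop hfreq
    have hx : x ∈ C := by rw [← hφx 0]; exact hu _
    have : Tendsto (u ∘ φ) atTop (𝓝 x) :=
      tendsto_const_nhds.congr (fun n => (hφx n).symm)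
    exact hcon x hx φ hφ this
  have hclosedM : ∀ M ⊆ Set.range u, IsClosed M := by
    intro M hM
    apply aux_isClosed_of_seq hdt
    intro v z hvM hvz
    by_cases hvx : ∃ x, {j | v j = x}.Infinite
    · obtain ⟨x, hx⟩ := hvx
      obtain ⟨ψ, hψ, hψx⟩ := Filter.extraction_of_frequently_atTop (by
        rw [Filter.frequently_atTop]
        intro a
        obtain ⟨b, hb, hab⟩ := hx.exists_gt a
        exact ⟨b, le_of_lt hab, hb⟩ : ∃ᶠ j in atTop, v j = x)
      have h1 : Tendsto (v ∘ ψ) atTop (𝓝 x) :=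
        tendsto_const_nhds.congr (fun n => (hψx n).symm)
      have h2 : Tendsto (v ∘ ψ) atTop (𝓝 z) := hvz.comp hψ.tendsto_atTop
      have hzx : z = x := tendsto_nhds_unique h2 h1
      subst hzx
      rw [← hψx 0]; exact hvM _
    · push_neg at hvx
      exfalso
      have key : ∀ j m : ℕ, ∃ Jm : ℕ × ℕ, j < Jm.1 ∧ m < Jm.2 ∧ u Jm.2 = v Jm.1 := by
        intro j m
        have hBad : {j' | ∃ i ≤ m, v j' = u i}.Finite := by
          have hsub : {j' | ∃ i ≤ m, v j' = u i} ⊆ ⋃ i ∈ Finset.range (m+1), {j' | v j' = u i} := by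
            rintro j' ⟨i, hi, hji⟩
            exact Set.mem_biUnion (Finset.mem_range.mpr (by omega)) hji
          exact Set.Finite.subset (Set.Finite.biUnion (Finset.range (m+1)).finite_toSet
            (fun i _ => hvx (u i))) hsub
        have hBig : ({j' | ∃ i ≤ m, v j' = u i} ∪ Set.Iic j).Finite :=
          hBad.union (Set.finite_Iic j)
        obtain ⟨J, hJ⟩ := hBig.infinite_compl.nonempty
        simp only [Set.mem_compl_iff, Set.mem_union, Set.mem_Iic, not_or, not_le] at hJ
        obtain ⟨hJBad, hJgt⟩ := hJ
        obtain ⟨m', hm'⟩ := hM (hvM J)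
        refine ⟨(J, m'), hJgt, ?_, hm'⟩
        by_contra hle
        push_neg at hle
        exact hJBad ⟨m', hle, hm'.symm⟩
      choose! f hf1 hf2 hf3 using key
      obtain ⟨m₀, hm₀⟩ := hM (hvM 0)
      let p : ℕ → ℕ × ℕ := fun k => Nat.rec ((0 : ℕ), m₀) (fun _ q => f q.1 q.2) k
      have hps : ∀ k, p (k+1) = f (p k).1 (p k).2 := fun k => rfl
      have hinv : ∀ k, u (p k).2 = v (p k).1 := by
        intro k
        induction k with
        | zero => exact hm₀
        | succ n _ => rw [hps]; exact hf3 _ _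
      have h1 : StrictMono fun k => (p k).1 :=
        strictMono_nat_of_lt_succ (fun k => by rw [hps]; exact hf1 _ _)
      have h2 : StrictMono fun k => (p k).2 :=
        strictMono_nat_of_lt_succ (fun k => by rw [hps]; exact hf2 _ _)
      have hvz' : Tendsto (fun k => v (p k).1) atTop (𝓝 z) := hvz.comp h1.tendsto_atTop
      have huz : Tendsto (u ∘ fun k => (p k).2) atTop (𝓝 z) :=
        hvz'.congr (fun k => (hinv k).symm)
      have hzC : z ∈ C := by
        have hvC : ∀ j, v j ∈ C := by
          intro j
          obtain ⟨i, hi⟩ := hM (hvM j)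
          rw [← hi]; exact hu i
        exact hCcl.mem_of_tendsto hvz (Filter.Eventually.of_forall hvC)
      exact hcon z hzC _ h2 huz
  set T : ℕ → Set Z := fun m => u '' Set.Ici m with hT
  have hTcl : ∀ m, IsClosed (T m) := fun m => hclosedM _ (Set.image_subset_range _ _)
  have hcover : C ⊆ ⋃ m, (T m)ᶜ := by
    intro c _
    by_contra hcn
    simp only [Set.mem_iUnion, Set.mem_compl_iff, not_exists, not_not] at hcn
    have hinf : {n | u n = c}.Infinite := by
      apply Set.infinite_of_not_bddAbove
      rintro ⟨b, hb⟩
      obtain ⟨n, hn, hnc⟩ := hcn (b+1)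
      have : n ≤ b := hb hnc
      simp only [Set.mem_Ici] at hn
      omega
    exact hinf (hfib c)
  obtain ⟨t, ht⟩ := hcc (fun m => (T m)ᶜ) (fun m => (hTcl m).isOpen_compl) hcover
  rcases t.eq_empty_or_nonempty with rfl | hte
  · simpa using ht (hu 0)
  · set N := t.max' hte with hN
    have hmem : u N ∈ ⋃ m ∈ t, (T m)ᶜ := ht (hu N)
    simp only [Set.mem_iUnion, Set.mem_compl_iff] at hmem
    obtain ⟨m, hmt, hm⟩ := hmem
    exact hm ⟨N, Set.mem_Ici.mpr (t.le_max' m hmt), rfl⟩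

lemma aux_cluster [T2Space Z] (hd : IsSemiMetric d)
    (hdt : ∀ U : Set Z, IsOpen U ↔ ∀ x ∈ U, ∃ ε > 0, {y | d x y < ε} ⊆ U)
    {C : Set Z} (hCcl : IsClosed C) (hcc : CountablyCompactSet C)
    {u : ℕ → Z} (hu : ∀ n, u n ∈ C) :
    ∃ q ∈ C, ∀ ε > (0:ℝ), ∀ M : ℕ, ∃ n, M ≤ n ∧ d q (u n) < ε := by
  obtain ⟨q, hqC, φ, hφ, htd⟩ := aux_subseq hd hdt hCcl hcc hu
  refine ⟨q, hqC, ?_⟩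
  intro ε hε M
  have := aux_dconv hd hdt htd ε hε
  rw [Filter.eventually_atTop] at this
  obtain ⟨N, hN⟩ := this
  exact ⟨φ (max N M), le_trans (le_max_right N M) (hφ.le_apply), hN (max N M) (le_max_left N M)⟩

lemma aux_cc_subset {K C : Set Z} (hcc : CountablyCompactSet K) (hC : IsClosed C)
    (hsub : C ⊆ K) : CountablyCompactSet C := by
  intro U hUo hUc
  set V : ℕ → Set Z := fun n => if n = 0 then Cᶜ else U (n-1) with hV
  have hVo : ∀ n, IsOpen (V n) := by
    intro n
    by_cases hn : n = 0 <;> simp [hV, hn, hC.isOpen_compl, hUo]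
  have hKV : K ⊆ ⋃ n, V n := by
    intro k _
    by_cases hk : k ∈ C
    · obtain ⟨n, hn⟩ := Set.mem_iUnion.mp (hUc hk)
      exact Set.mem_iUnion.mpr ⟨n+1, by simp [hV, hn]⟩
    · exact Set.mem_iUnion.mpr ⟨0, by simp [hV, hk]⟩
  obtain ⟨t, ht⟩ := hcc V hVo hKV
  refine ⟨t.image Nat.pred, ?_⟩
  intro c hc
  obtain ⟨n, hnt, hn⟩ := Set.mem_iUnion₂.mp (ht (hsub hc))
  rcases Nat.eq_zero_or_pos n with rfl | hpos
  · simp [hV] at hn; exact absurd hc hn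
  · have : c ∈ U (n-1) := by
      have : n ≠ 0 := by omega
      simpa [hV, this] using hn
    exact Set.mem_iUnion₂.mpr ⟨n-1, Finset.mem_image.mpr ⟨n, hnt, rfl⟩, this⟩

end Aux

/-- A regular Hausdorff symmetrizable space in which every point has a countably
compact neighborhood has symmetrizable product with every symmetrizable space. -/
theorem stmt18 {X : Type u} [TopologicalSpace X] [T2Space X] [RegularSpace X]
    (hs : Symmetrizable X) (h : ∀ x : X, ∃ K ∈ nhds x, CountablyCompactSet K) :
    ∀ (Y : Type u) [TopologicalSpace Y], Symmetrizable Y →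
      Symmetrizable (X × Y) := by
  obtain ⟨dX, hdX, htX⟩ := hs
  intro Y _ hsY
  obtain ⟨dY, hdY, htY⟩ := hsY
  refine ⟨fun p q => max (dX p.1 q.1) (dY p.2 q.2), ⟨?_, ?_, ?_⟩, ?_⟩
  · intro x y
    exact le_max_of_le_left (hdX.1 _ _)
  · intro x y
    simp only [hdX.2.1 x.1 y.1, hdY.2.1 x.2 y.2]
  · intro x y
    constructor
    · intro h0
      have h1 : dX x.1 y.1 = 0 :=
        le_antisymm (by rw [← h0]; exact le_max_left _ _) (hdX.1 _ _)
      have h2 : dY x.2 y.2 = 0 :=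
        le_antisymm (by rw [← h0]; exact le_max_right _ _) (hdY.1 _ _)
      exact Prod.ext ((hdX.2.2 _ _).mp h1) ((hdY.2.2 _ _).mp h2)
    · rintro rfl
      simp only [(hdX.2.2 _ _).mpr rfl, (hdY.2.2 _ _).mpr rfl]
      simp
  · intro U
    constructor
    · intro hU p hp
      obtain ⟨V, W, hV, hW, hxV, hyW, hVW⟩ := isOpen_prod_iff.mp hU p.1 p.2 hp
      obtain ⟨ε₁, hε₁, hb₁⟩ := (htX V).mp hV p.1 hxV
      obtain ⟨ε₂, hε₂, hb₂⟩ := (htY W).mp hW p.2 hyW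
      refine ⟨min ε₁ ε₂, lt_min hε₁ hε₂, ?_⟩
      intro q hq
      simp only [Set.mem_setOf_eq, max_lt_iff, lt_min_iff] at hq
      have : (q.1, q.2) ∈ V ×ˢ W := ⟨hb₁ hq.1.1, hb₂ hq.2.2⟩
      exact hVW this
    · intro hU
      rw [isOpen_iff_forall_mem_open]
      rintro ⟨x₀, y₀⟩ hp
      -- the slice {x | (x, y₀) ∈ U} is open in X
      have hS₀ : IsOpen {x : X | (x, y₀) ∈ U} := by
        rw [htX]
        intro x hx
        obtain ⟨ε, hε, hball⟩ := hU (x, y₀) hx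
        refine ⟨ε, hε, ?_⟩
        intro x' hx'
        apply hball
        simp only [Set.mem_setOf_eq]
        exact max_lt hx' (by rw [(hdY.2.2 y₀ y₀).mpr rfl]; exact hε)
      obtain ⟨K, hK, hKcc⟩ := h x₀
      have hmem : {x : X | (x, y₀) ∈ U} ∩ interior K ∈ 𝓝 x₀ :=
        Filter.inter_mem (hS₀.mem_nhds hp) (interior_mem_nhds.mpr hK)
      obtain ⟨C, hCn, hCcl, hCsub⟩ := exists_mem_nhds_isClosed_subset hmem
      have hCK : C ⊆ K := fun x hx => interior_subset (hCsub hx).2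
      have hCcc : CountablyCompactSet C := aux_cc_subset hKcc hCcl hCK
      set W : Set Y := {y : Y | ∀ x ∈ C, (x, y) ∈ U} with hWdef
      have hyW : y₀ ∈ W := fun x hx => (hCsub hx).1
      have hWopen : IsOpen W := by
        rw [htY]
        intro y hy
        by_contra hcon
        push_neg at hcon
        have hsel : ∀ n : ℕ, ∃ (x : X) (y' : Y),
            x ∈ C ∧ dY y y' < 1 / (n + 1 : ℝ) ∧ (x, y') ∉ U := by
          intro n
          obtain ⟨y', hy', hy'W⟩ :=
            Set.not_subset.mp (hcon (1 / (n + 1 : ℝ)) (by positivity))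
          simp only [hWdef, Set.mem_setOf_eq, not_forall] at hy'W
          obtain ⟨x, hxC, hxU⟩ := hy'W
          exact ⟨x, y', hxC, hy', hxU⟩
        choose xs ys hxsC hys hnU using hsel
        obtain ⟨q, hqC, hq⟩ := aux_cluster hdX htX hCcl hCcc hxsC
        obtain ⟨η, hη, hball⟩ := hU (q, y) (hy q hqC)
        obtain ⟨N, hN⟩ := exists_nat_one_div_lt hη
        obtain ⟨n, hnN, hnd⟩ := hq η hη N
        apply hnU n
        apply hball
        simp only [Set.mem_setOf_eq]
        have hd2 : dY y (ys n) < η := by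
          have h1 : (1:ℝ)/(n+1) ≤ 1/(N+1) := by
            apply one_div_le_one_div_of_le (by positivity)
            exact_mod_cast by omega
          linarith [hys n]
        exact max_lt hnd hd2
      refine ⟨interior C ×ˢ W, ?_, (isOpen_interior).prod hWopen,
        ⟨mem_interior_iff_mem_nhds.mpr hCn, hyW⟩⟩
      rintro ⟨a, b⟩ ⟨ha, hb⟩
      exact hb a (interior_subset ha)
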